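/- Let A be a finite set of hyperplanes (codimension-1 linear subspaces) in F_q^ℓ and define N(k) to be the number of points of (F_{q^k})^ℓ lying on none of the hyperplanes H ⊗ F_{q^k} (the extension of scalars of H to F_{q^k}). If N(k) = 0 for some k ≥ 0, then N(j) = 0 for all 0 ≤ j ≤ k. -/

import Mathlib

/-- Auxiliary computation: pushing an `F`-linear combination through a power-basis
expansion in an `F`-algebra `E`. -/
lemma sum_comb {F E : Type*} [CommRing F] [CommRing E] [Algebra F E]
    {ℓ d : ℕ} (a : Fin ℓ → F) (c : Fin ℓ → Fin d → F) (g : E) :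
    (∑ i, algebraMap F E (a i) * ∑ r, c i r • g ^ (r : ℕ))
      = ∑ r : Fin d, (∑ i, a i * c i r) • g ^ (r : ℕ) := by
  simp only [Finset.mul_sum, Finset.sum_smul]
  rw [Finset.sum_comm]
  congr 1; ext r; congr 1; ext i
  simp [Algebra.smul_def, map_mul, mul_assoc]

/-- Let `A` be a finite set of hyperplanes (kernels of nonzero linear forms) in `F_q^ℓ`,
and for a finite extension field `K` of `F_q` let `N(K)` count points of `K^ℓ` avoiding
all the extended hyperplanes.  If `N(K) = 0` then `N(L) = 0` for any extension `L` of
`F_q` with `#L ≤ #K` (i.e. `L = F_{q^j}` with `j ≤ k` where `K = F_{q^k}`). -/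
theorem avoid_hyperplanes_smaller_extension
    {F K L : Type*} [Field F] [Fintype F] [Field K] [Fintype K] [Field L] [Fintype L]
    [Algebra F K] [Algebra F L] (hcard : Fintype.card L ≤ Fintype.card K)
    {ℓ n : ℕ} (α : Fin n → ((Fin ℓ → F) →ₗ[F] F)) (hα : ∀ m, α m ≠ 0)
    (hK : ¬ ∃ x : Fin ℓ → K,
      ∀ m, (∑ i, algebraMap F K (α m (Pi.single i 1)) * x i) ≠ 0) :
    ¬ ∃ x : Fin ℓ → L,
      ∀ m, (∑ i, algebraMap F L (α m (Pi.single i 1)) * x i) ≠ 0 := by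
  rintro ⟨x, hx⟩
  apply hK
  let pbL := Field.powerBasisOfFiniteOfSeparable F L
  let pbK := Field.powerBasisOfFiniteOfSeparable F K
  have hdim : pbL.dim ≤ pbK.dim := by
    have h1 : Fintype.card L = Fintype.card F ^ pbL.dim := by
      rw [← pbL.finrank]; exact Module.card_eq_pow_finrank
    have h2 : Fintype.card K = Fintype.card F ^ pbK.dim := by
      rw [← pbK.finrank]; exact Module.card_eq_pow_finrank
    rw [h1, h2] at hcard
    exact (pow_le_pow_iff_right₀ Fintype.one_lt_card).mp hcard
  set a : Fin n → Fin ℓ → F := fun m i => α m (Pi.single i 1) with ha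
  set c : Fin ℓ → Fin pbL.dim → F := fun i r => pbL.basis.repr (x i) r with hc
  set d : Fin n → Fin pbL.dim → F := fun m r => ∑ i, a m i * c i r with hd
  have hxrep : ∀ i, x i = ∑ r, c i r • pbL.gen ^ (r : ℕ) := by
    intro i
    conv_lhs => rw [← pbL.basis.sum_repr (x i)]
    congr 1; ext r
    rw [pbL.coe_basis]
  -- over L : the sums equal ∑ r, d m r • gen^r, hence some coefficient is nonzero
  have hdne : ∀ m, ∃ r, d m r ≠ 0 := by
    intro m
    by_contra h
    push_neg at h
    apply hx m
    calc (∑ i, algebraMap F L (a m i) * x i)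
        = ∑ i, algebraMap F L (a m i) * ∑ r, c i r • pbL.gen ^ (r : ℕ) := by
          congr 1; ext i; rw [hxrep i]
      _ = ∑ r : Fin pbL.dim, d m r • pbL.gen ^ (r : ℕ) := sum_comb _ _ _
      _ = 0 := by simp [h]
  -- linear independence of powers of pbK.gen up to pbK.dim, restricted to Fin pbL.dim
  have hli : LinearIndependent F (fun r : Fin pbL.dim => pbK.gen ^ (r : ℕ)) := by
    have := pbK.basis.linearIndependent.comp (Fin.castLE hdim)
      (Fin.castLE_injective hdim)
    convert this using 1
    ext r
    simp [pbK.coe_basis]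
    rfl
  refine ⟨fun i => ∑ r, c i r • pbK.gen ^ (r : ℕ), fun m => ?_⟩
  rw [sum_comb]
  intro h0
  obtain ⟨r, hr⟩ := hdne m
  exact hr (Fintype.linearIndependent_iff.mp hli (d m) h0 r)
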